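/- Let α be the real root of x³ − x − 1 and a = (α+1)/((α−β)(α−γ)) where β, γ are the other roots. Then for all integers n ≥ 1, ℓ₁, ℓ₂ ≥ 1, and digits d₁, d₂ ∈ {0,…,9} with d₁ > 0, one has 9·a·α^n ≠ (d₁·10^{ℓ₁} − (d₁ − d₂))·10^{ℓ₂}. Equivalently, the quantity Λ₂ = ((d₁·10^{ℓ₁} − (d₁−d₂))/(9a))·α^{−n}·10^{ℓ₂} − 1 is nonzero. -/

import Mathlib

open Polynomial

lemma cubic_monic : (X^3 - X - 1 : ℚ[X]).Monic := by
  have h : (X + 1 : ℚ[X]).degree < 3 := by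
    refine lt_of_le_of_lt (Polynomial.degree_add_le _ _) ?_
    simp
  simpa [sub_sub] using Polynomial.monic_X_pow_sub h

lemma cubic_int_monic : (X^3 - X - 1 : ℤ[X]).Monic := by
  have h : (X + 1 : ℤ[X]).degree < 3 := by
    refine lt_of_le_of_lt (Polynomial.degree_add_le _ _) ?_
    simp
  simpa [sub_sub] using Polynomial.monic_X_pow_sub h

lemma no_rat_root (q : ℚ) : q ^ 3 ≠ q + 1 := by
  intro hq
  have hint : IsLocalization.IsInteger ℤ q := by
    apply isInteger_of_is_root_of_monic cubic_int_monic
    simp only [map_sub, map_pow, aeval_X, map_one]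
    rw [hq]; ring
  obtain ⟨m, hm⟩ := hint
  simp only [algebraMap_int_eq, eq_intCast] at hm
  rw [← hm] at hq
  have hm3 : m ^ 3 = m + 1 := by exact_mod_cast hq
  have hdvd : m ∣ 1 := ⟨m ^ 2 - 1, by linarith [hm3]⟩
  rcases Int.isUnit_iff.mp (isUnit_of_dvd_one hdvd) with h | h <;> subst h <;> norm_num at hm3

lemma cubic_natDegree : (X^3 - X - 1 : ℚ[X]).natDegree = 3 := by
  compute_degree!

lemma cubic_irred : Irreducible (X^3 - X - 1 : ℚ[X]) := by
  rw [cubic_monic.irreducible_iff_roots_eq_zero_of_degree_le_three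
    (by rw [cubic_natDegree]; norm_num) (by rw [cubic_natDegree])]
  rw [Multiset.eq_zero_iff_forall_notMem]
  intro q hq
  rw [mem_roots cubic_monic.ne_zero] at hq
  simp only [IsRoot, eval_sub, eval_pow, eval_X, eval_one] at hq
  exact no_rat_root q (by linarith)

lemma cubic_indep (x : ℝ) (hx : x ^ 3 = x + 1) (u v w : ℚ)
    (h : (u : ℝ) + v * x + w * x ^ 2 = 0) : v = 0 := by
  have haev : aeval x (X^3 - X - 1 : ℚ[X]) = 0 := by
    simp only [map_sub, map_pow, aeval_X, map_one]
    rw [hx]; ring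
  have hmin : minpoly ℚ x = X^3 - X - 1 :=
    (minpoly.eq_of_irreducible_of_monic cubic_irred haev cubic_monic).symm
  set g : ℚ[X] := C u + C v * X + C w * X^2 with hg
  have hgev : aeval x g = 0 := by
    simp only [hg, map_add, map_mul, map_pow, aeval_C, aeval_X, eq_ratCast]
    linear_combination h
  have hdvd : (X^3 - X - 1 : ℚ[X]) ∣ g := hmin ▸ minpoly.dvd ℚ x hgev
  have hg0 : g = 0 := by
    by_contra hne
    have hd := Polynomial.natDegree_le_natDegree (Polynomial.degree_le_of_dvd hdvd hne)
    rw [cubic_natDegree] at hd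
    have h2 : g.natDegree ≤ 2 := by rw [hg]; compute_degree
    omega
  have := congrArg (fun p => Polynomial.coeff p 1) hg0
  simpa [hg, coeff_add, coeff_C, coeff_C_mul, coeff_X, coeff_X_pow] using this

def padC : ℕ → ℕ × ℕ × ℕ
  | 0 => (1, 0, 0)
  | n + 1 => ((padC n).2.2, (padC n).1 + (padC n).2.2, (padC n).2.1)

lemma padC_spec (x : ℝ) (hx : x ^ 3 = x + 1) (n : ℕ) :
    x ^ n = (padC n).1 + (padC n).2.1 * x + (padC n).2.2 * x ^ 2 := by
  induction n with
  | zero => simp [padC]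
  | succ n ih =>
    rw [pow_succ, ih]
    simp only [padC]
    push_cast
    linear_combination ((padC n).2.2 : ℝ) * hx

lemma padC_pos (n : ℕ) : 1 ≤ (padC n).1 + (padC n).2.1 + (padC n).2.2 := by
  induction n with
  | zero => simp [padC]
  | succ n ih => simp only [padC]; omega

/-- With `α` the real root of `x³ − x − 1`, `β, γ` the other (complex conjugate) roots,
and `a = (α+1)/((α−β)(α−γ))`, for all `n, ℓ₁, ℓ₂ ≥ 1` and digits `d₁, d₂ ∈ {0,…,9}`
with `d₁ > 0` one has `9·a·α^n ≠ (d₁·10^ℓ₁ − (d₁−d₂))·10^ℓ₂`; equivalently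
`Λ₂ = ((d₁·10^ℓ₁ − (d₁−d₂))/(9a))·α^(−n)·10^ℓ₂ − 1` is nonzero. -/
theorem Lambda2_nonzero
    (α β γ a : ℂ) (hα : α ^ 3 = α + 1) (hαre : α.im = 0)
    (hβ : β ^ 3 = β + 1) (hβim : β.im ≠ 0) (hγ : γ = starRingEnd ℂ β)
    (ha : a = (α + 1) / ((α - β) * (α - γ)))
    (n ℓ₁ ℓ₂ d₁ d₂ : ℕ) (hn : 1 ≤ n) (hℓ₁ : 1 ≤ ℓ₁) (hℓ₂ : 1 ≤ ℓ₂)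
    (hd₁ : d₁ ≤ 9) (hd₂ : d₂ ≤ 9) (hd₁pos : 0 < d₁) :
    9 * a * α ^ n ≠ ((d₁ : ℂ) * 10 ^ ℓ₁ - ((d₁ : ℂ) - (d₂ : ℂ))) * 10 ^ ℓ₂ ∧
      ((d₁ : ℂ) * 10 ^ ℓ₁ - ((d₁ : ℂ) - (d₂ : ℂ))) / (9 * a) * α ^ (-(n : ℤ)) *
          10 ^ ℓ₂ - 1 ≠ 0 := by
  -- α is real
  set x : ℝ := α.re with hxdef
  have hx : (x : ℂ) = α := by
    apply Complex.ext <;> simp [hαre, hxdef]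
  have hx3 : x ^ 3 = x + 1 := by
    have := hα
    rw [← hx] at this
    exact_mod_cast this
  have hx1 : 1 < x := by
    nlinarith [sq_nonneg (x - 1), sq_nonneg (x + 1), sq_nonneg x, sq_nonneg (x^2 - 1)]
  have hα0 : α ≠ 0 := by
    rw [← hx]
    exact_mod_cast (show x ≠ 0 by linarith)
  -- the conjugate root
  have hγ3 : γ ^ 3 = γ + 1 := by
    rw [hγ, ← map_pow, hβ]
    simp
  have hαβ : α ≠ β := fun h => hβim (h ▸ hαre)
  have hβγ : β ≠ γ := by
    intro h
    rw [hγ] at h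
    exact hβim (Complex.conj_eq_iff_im.mp h.symm)
  -- symmetric function identities
  have s1 : α ^ 2 + α * β + β ^ 2 = 1 := by
    have h1 : (α - β) * (α ^ 2 + α * β + β ^ 2 - 1) = 0 := by linear_combination hα - hβ
    have := (mul_eq_zero.mp h1).resolve_left (sub_ne_zero.mpr hαβ)
    linear_combination this
  have s2 : α ^ 2 + α * γ + γ ^ 2 = 1 := by
    have hαγ : α ≠ γ := by
      intro h
      apply hβim
      have h2 : γ.im = 0 := h ▸ hαre
      rw [hγ] at h2
      simpa using h2
    have h1 : (α - γ) * (α ^ 2 + α * γ + γ ^ 2 - 1) = 0 := by linear_combination hα - hγ3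
    have := (mul_eq_zero.mp h1).resolve_left (sub_ne_zero.mpr hαγ)
    linear_combination this
  have e1 : α + β + γ = 0 := by
    have h1 : (β - γ) * (α + β + γ) = 0 := by linear_combination s1 - s2
    exact (mul_eq_zero.mp h1).resolve_left (sub_ne_zero.mpr hβγ)
  have e3 : α * β * γ = 1 := by
    have h33 : (3 : ℂ) * (α * β * γ) = 3 := by
      linear_combination hα + hβ + hγ3 +
        (1 - (α^2 + β^2 + γ^2 - α*β - α*γ - β*γ)) * e1
    linear_combination h33 / 3
  have key : (α - β) * (α - γ) = 3 * α ^ 2 - 1 := by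
    have hc : α * ((α - β) * (α - γ)) = α * (3 * α ^ 2 - 1) := by
      linear_combination -hα + e3 - α ^ 2 * e1
    exact mul_left_cancel₀ hα0 hc
  have hden0 : (3 : ℂ) * α ^ 2 - 1 ≠ 0 := by
    rw [← hx]
    exact_mod_cast (show (3 : ℝ) * x ^ 2 - 1 ≠ 0 by nlinarith)
  have hA1 : α + 1 ≠ 0 := by
    rw [← hx]
    exact_mod_cast (show x + 1 ≠ 0 by linarith)
  rw [key] at ha
  have ha0 : a ≠ 0 := by
    rw [ha]
    exact div_ne_zero hA1 hden0
  -- the main inequality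
  have hfirst : 9 * a * α ^ n ≠ ((d₁ : ℂ) * 10 ^ ℓ₁ - ((d₁ : ℂ) - (d₂ : ℂ))) * 10 ^ ℓ₂ := by
    intro hcon
    rw [ha] at hcon
    have h9 : 9 * (α + 1) * α ^ n =
        ((d₁ : ℂ) * 10 ^ ℓ₁ - ((d₁ : ℂ) - (d₂ : ℂ))) * 10 ^ ℓ₂ * (3 * α ^ 2 - 1) := by
      field_simp [hden0] at hcon
      rw [div_eq_iff (by convert hden0 using 1; ring)] at hcon
      linear_combination hcon
    set M : ℚ := ((d₁ : ℚ) * 10 ^ ℓ₁ - ((d₁ : ℚ) - (d₂ : ℚ))) * 10 ^ ℓ₂ with hMdef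
    have hreal : 9 * (x + 1) * x ^ n = (M : ℝ) * (3 * x ^ 2 - 1) := by
      have hMC : (((M : ℝ)) : ℂ) = ((d₁ : ℂ) * 10 ^ ℓ₁ - ((d₁ : ℂ) - (d₂ : ℂ))) * 10 ^ ℓ₂ := by
        rw [hMdef]; push_cast; ring
      rw [← hMC, ← hx] at h9
      exact_mod_cast h9
    have hsn := padC_spec x hx3 n
    have hsn1 := padC_spec x hx3 (n + 1)
    have hv := cubic_indep x hx3
      (9 * ((padC (n+1)).1 + (padC n).1) + M)
      (9 * (((padC (n+1)).2.1 : ℚ) + ((padC n).2.1 : ℚ)))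
      (9 * ((padC (n+1)).2.2 + (padC n).2.2) - 3 * M)
      (by push_cast; linear_combination (-9 : ℝ) * hsn1 - 9 * hsn + hreal)
    have hq : ((padC (n+1)).2.1 : ℚ) + ((padC n).2.1 : ℚ) = 0 := by linarith
    have hqn : (padC (n+1)).2.1 + (padC n).2.1 = 0 := by exact_mod_cast hq
    have hstep : (padC (n+1)).2.1 = (padC n).1 + (padC n).2.2 := by simp [padC]
    have := padC_pos n
    omega
  refine ⟨hfirst, ?_⟩
  intro h2
  apply hfirst
  rw [zpow_neg, zpow_natCast] at h2
  have hpow : α ^ n ≠ 0 := pow_ne_zero _ hα0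
  have h3 := sub_eq_zero.mp h2
  field_simp [ha0, hpow] at h3
  exact h3.symm
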